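/- dtw(τq, τd) equals the minimum, over all matching sequences a : {1,…,m} → {1,…,n}, of Σ_{k=1}^{a(1)−1} sub(τq[1],τd[k]) + Σ_{i=1}^{m} Cost(i,a) + Σ_{k=a(m)+1}^{n} sub(τq[m],τd[k]). -/

import Mathlib

/-- `a` is a matching sequence on indices `1..m` with values in `[lo, hi]`:
it is monotone nondecreasing on `{1,…,m}` and `lo ≤ a i ≤ hi` there. -/
def IsMatchingOn (m lo hi : ℕ) (a : ℕ → ℕ) : Prop :=
  (∀ i, 1 ≤ i → i ≤ m → lo ≤ a i ∧ a i ≤ hi) ∧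
  ∀ i j, 1 ≤ i → i ≤ j → j ≤ m → a i ≤ a j

/-- Conversion cost `Cost(i, a)` of the `i`-th query point under a matching sequence `a`. -/
noncomputable def convCost (CostDel CostSub : ℕ → ℕ → ℝ) (CostIns : ℕ → ℕ → ℕ → ℝ)
    (a : ℕ → ℕ) (i : ℕ) : ℝ :=
  if i = 1 then CostSub 1 (a 1)
  else if a (i - 1) = a i then CostDel i (a i)
  else if a (i - 1) = a i - 1 then CostSub i (a i)
  else CostIns i (a (i - 1)) (a i)

/-- Total conversion cost `Σ_{k=1}^{m} Cost(k, a)`. -/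
noncomputable def totalCost (CostDel CostSub : ℕ → ℕ → ℝ) (CostIns : ℕ → ℕ → ℕ → ℝ)
    (m : ℕ) (a : ℕ → ℕ) : ℝ :=
  ∑ k ∈ Finset.Icc 1 m, convCost CostDel CostSub CostIns a k

/-- The DTW distance `dtw(σ[1:i], ρ[1:j])` between the length-`i` prefix of `σ` and the
length-`j` prefix of `ρ`, defined by the standard recurrence (the values for `i = 0` or
`j = 0` are irrelevant placeholders). -/
noncomputable def dtwA {P : Type*} (sub : P → P → ℝ) (σ ρ : ℕ → P) : ℕ → ℕ → ℝ
  | 0, _ => 0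
  | _ + 1, 0 => 0
  | 1, j + 1 => ∑ k ∈ Finset.Icc 1 (j + 1), sub (σ 1) (ρ k)
  | i + 2, 1 => ∑ k ∈ Finset.Icc 1 (i + 2), sub (σ k) (ρ 1)
  | i + 2, j + 2 =>
      min (min (dtwA sub σ ρ (i + 1) (j + 2)) (dtwA sub σ ρ (i + 2) (j + 1)))
        (dtwA sub σ ρ (i + 1) (j + 1)) + sub (σ (i + 2)) (ρ (j + 2))

section AuxDTW

open Finset

variable {P : Type*} (τq τd : ℕ → P) (sub : P → P → ℝ)

/-- The DTW insertion cost. -/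
noncomputable def insC : ℕ → ℕ → ℕ → ℝ := fun i k j =>
  sInf {w : ℝ | ∃ t : ℕ, k ≤ t ∧ t ≤ j - 1 ∧
    w = (∑ p ∈ Finset.Icc (k + 1) t, sub (τq (i - 1)) (τd p)) +
        ∑ p ∈ Finset.Icc (t + 1) j, sub (τq i) (τd p)}

/-- Prefix sum plus total conversion cost of a matching on `1..i`. -/
noncomputable def pinVal (i : ℕ) (a : ℕ → ℕ) : ℝ :=
  (∑ k ∈ Finset.Icc 1 (a 1 - 1), sub (τq 1) (τd k)) +
    totalCost (fun i j => sub (τq i) (τd j)) (fun i j => sub (τq i) (τd j))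
      (insC τq τd sub) i a

lemma sum_Icc_bot (f : ℕ → ℝ) {a b : ℕ} (h : a ≤ b) :
    ∑ k ∈ Icc a b, f k = f a + ∑ k ∈ Icc (a + 1) b, f k := by
  rw [Finset.Icc_eq_cons_Ioc h, Finset.sum_cons, ← Finset.Icc_add_one_left_eq_Ioc]

lemma insC_bdd (hsub : ∀ p q, 0 ≤ sub p q) (i k j : ℕ) :
    BddBelow {w : ℝ | ∃ t : ℕ, k ≤ t ∧ t ≤ j - 1 ∧
      w = (∑ p ∈ Finset.Icc (k + 1) t, sub (τq (i - 1)) (τd p)) +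
          ∑ p ∈ Finset.Icc (t + 1) j, sub (τq i) (τd p)} := by
  refine ⟨0, ?_⟩
  rintro w ⟨t, -, -, rfl⟩
  exact add_nonneg (Finset.sum_nonneg fun p _ => hsub _ _)
    (Finset.sum_nonneg fun p _ => hsub _ _)

lemma insC_le (hsub : ∀ p q, 0 ≤ sub p q) {i k j : ℕ} (t : ℕ) (ht1 : k ≤ t) (ht2 : t ≤ j - 1) :
    insC τq τd sub i k j ≤ (∑ p ∈ Finset.Icc (k + 1) t, sub (τq (i - 1)) (τd p)) +
        ∑ p ∈ Finset.Icc (t + 1) j, sub (τq i) (τd p) :=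
  csInf_le (insC_bdd τq τd sub hsub i k j) ⟨t, ht1, ht2, rfl⟩

lemma le_insC {c : ℝ} {i k j : ℕ} (hk : k ≤ j - 1)
    (h : ∀ t, k ≤ t → t ≤ j - 1 →
      c ≤ (∑ p ∈ Finset.Icc (k + 1) t, sub (τq (i - 1)) (τd p)) +
          ∑ p ∈ Finset.Icc (t + 1) j, sub (τq i) (τd p)) :
    c ≤ insC τq τd sub i k j := by
  refine le_csInf ⟨_, ⟨k, le_rfl, hk, rfl⟩⟩ ?_
  rintro w ⟨t, ht1, ht2, rfl⟩
  exact h t ht1 ht2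

lemma insC_nonneg (hsub : ∀ p q, 0 ≤ sub p q) (i k j : ℕ) : 0 ≤ insC τq τd sub i k j := by
  apply Real.sInf_nonneg
  rintro w ⟨t, -, -, rfl⟩
  exact add_nonneg (Finset.sum_nonneg fun p _ => hsub _ _)
    (Finset.sum_nonneg fun p _ => hsub _ _)

lemma insC_step (hsub : ∀ p q, 0 ≤ sub p q) (i k j : ℕ) (hk : k ≤ j - 1) (hj : 1 ≤ j) :
    insC τq τd sub i k (j + 1) ≤ insC τq τd sub i k j + sub (τq i) (τd (j + 1)) := by
  have h1 : insC τq τd sub i k (j + 1) - sub (τq i) (τd (j + 1)) ≤ insC τq τd sub i k j := by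
    apply le_insC τq τd sub hk
    intro t ht1 ht2
    rw [sub_le_iff_le_add]
    have h2 := insC_le τq τd sub hsub (i := i) (k := k) (j := j + 1) t ht1 (by omega)
    rw [Finset.sum_Icc_succ_top (show t + 1 ≤ j + 1 by omega)] at h2
    linarith
  linarith

lemma convCost_one (D S : ℕ → ℕ → ℝ) (I : ℕ → ℕ → ℕ → ℝ) (a : ℕ → ℕ) :
    convCost D S I a 1 = S 1 (a 1) := by simp [convCost]

lemma convCost_ne1 (D S : ℕ → ℕ → ℝ) (I : ℕ → ℕ → ℕ → ℝ) (a : ℕ → ℕ) (i : ℕ) (hi : i ≠ 1) :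
    convCost D S I a i =
      if a (i - 1) = a i then D i (a i)
      else if a (i - 1) = a i - 1 then S i (a i)
      else I i (a (i - 1)) (a i) := by
  simp only [convCost, if_neg hi]

lemma convCost_nonneg (hsub : ∀ p q, 0 ≤ sub p q) (a : ℕ → ℕ) (i : ℕ) :
    0 ≤ convCost (fun i j => sub (τq i) (τd j)) (fun i j => sub (τq i) (τd j))
      (insC τq τd sub) a i := by
  unfold convCost
  split_ifs <;> first
    | exact hsub _ _
    | exact insC_nonneg τq τd sub hsub _ _ _

lemma pinVal_succ (a : ℕ → ℕ) (i : ℕ) (hi : 1 ≤ i) :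
    pinVal τq τd sub i a = pinVal τq τd sub (i - 1) a +
      convCost (fun i j => sub (τq i) (τd j)) (fun i j => sub (τq i) (τd j))
        (insC τq τd sub) a i := by
  obtain ⟨i, rfl⟩ : ∃ i', i = i' + 1 := ⟨i - 1, by omega⟩
  rw [show i + 1 - 1 = i from rfl]
  unfold pinVal totalCost
  rw [Finset.sum_Icc_succ_top (show 1 ≤ i + 1 by omega)]
  ring

lemma pinVal_congr (a b : ℕ → ℕ) (i : ℕ) (hi : 1 ≤ i) (h : ∀ k, 1 ≤ k → k ≤ i → a k = b k) :
    pinVal τq τd sub i a = pinVal τq τd sub i b := by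
  unfold pinVal totalCost
  rw [h 1 le_rfl hi]
  congr 1
  refine Finset.sum_congr rfl fun k hk => ?_
  simp only [Finset.mem_Icc] at hk
  rcases eq_or_ne k 1 with rfl | hk1
  · simp only [convCost_one]
    rw [h 1 le_rfl hi]
  · rw [convCost_ne1 _ _ _ _ _ hk1, convCost_ne1 _ _ _ _ _ hk1,
      h k hk.1 hk.2, h (k - 1) (by omega) (by omega)]

lemma pinVal_one (a : ℕ → ℕ) (ha : 1 ≤ a 1) :
    pinVal τq τd sub 1 a = ∑ k ∈ Finset.Icc 1 (a 1), sub (τq 1) (τd k) := by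
  unfold pinVal totalCost
  rw [Finset.Icc_self, Finset.sum_singleton, convCost_one]
  obtain ⟨b, hb⟩ : ∃ b, a 1 = b + 1 := ⟨a 1 - 1, by omega⟩
  rw [hb, Finset.sum_Icc_succ_top (show 1 ≤ b + 1 by omega), show b + 1 - 1 = b from rfl]

lemma dtwA_one (j : ℕ) (hj : 1 ≤ j) :
    dtwA sub τq τd 1 j = ∑ k ∈ Icc 1 j, sub (τq 1) (τd k) := by
  cases j with
  | zero => exact absurd hj (by omega)
  | succ j => rw [dtwA]

lemma dtwA_col (i : ℕ) (hi : 1 ≤ i) :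
    dtwA sub τq τd i 1 = ∑ k ∈ Icc 1 i, sub (τq k) (τd 1) := by
  match i, hi with
  | 1, _ => rw [dtwA]; simp
  | (i + 2), _ => rw [dtwA]

lemma dtwA_step_right : ∀ i j : ℕ, 1 ≤ i → 1 ≤ j →
    dtwA sub τq τd i (j + 1) ≤ dtwA sub τq τd i j + sub (τq i) (τd (j + 1))
  | 0, _, h, _ => absurd h (by omega)
  | _ + 1, 0, _, h => absurd h (by omega)
  | 1, j + 1, _, _ => le_of_eq (by
      rw [dtwA_one τq τd sub (j + 1 + 1) (by omega), dtwA_one τq τd sub (j + 1) (by omega),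
        Finset.sum_Icc_succ_top (show 1 ≤ j + 1 + 1 by omega)])
  | i + 2, j + 1, _, _ => by
      show dtwA sub τq τd (i + 2) (j + 2) ≤ _
      rw [dtwA]
      exact add_le_add_left ((min_le_left _ _).trans (min_le_right _ _)) _

lemma dtwA_row (i : ℕ) (hi : 1 ≤ i) (j' : ℕ) (hj' : 1 ≤ j') :
    ∀ j, j' ≤ j → dtwA sub τq τd i j ≤ dtwA sub τq τd i j' +
      ∑ k ∈ Icc (j' + 1) j, sub (τq i) (τd k) := by
  intro j hj
  induction j, hj using Nat.le_induction with
  | base => rw [Finset.Icc_eq_empty (by omega), Finset.sum_empty, add_zero]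
  | succ j hj IH =>
      have h1 := dtwA_step_right τq τd sub i j hi (by omega)
      rw [Finset.sum_Icc_succ_top (show j' + 1 ≤ j + 1 by omega)]
      linarith

lemma dtwA_diag (i j : ℕ) (hi : 1 ≤ i) (hj : 1 ≤ j) :
    dtwA sub τq τd (i + 1) (j + 1) ≤ dtwA sub τq τd i j + sub (τq (i + 1)) (τd (j + 1)) := by
  obtain ⟨i, rfl⟩ : ∃ i', i = i' + 1 := ⟨i - 1, by omega⟩
  obtain ⟨j, rfl⟩ : ∃ j', j = j' + 1 := ⟨j - 1, by omega⟩
  show dtwA sub τq τd (i + 2) (j + 2) ≤ _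
  rw [dtwA]
  exact add_le_add_left (min_le_right _ _) _

lemma dtwA_vert (i j : ℕ) (hi : 1 ≤ i) (hj : 1 ≤ j) :
    dtwA sub τq τd (i + 1) j ≤ dtwA sub τq τd i j + sub (τq (i + 1)) (τd j) := by
  match j, hj with
  | 1, _ =>
      refine le_of_eq ?_
      rw [dtwA_col τq τd sub (i + 1) (by omega), dtwA_col τq τd sub i hi,
        Finset.sum_Icc_succ_top (show 1 ≤ i + 1 by omega)]
  | j + 2, _ =>
      obtain ⟨i, rfl⟩ : ∃ i', i = i' + 1 := ⟨i - 1, by omega⟩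
      show dtwA sub τq τd (i + 2) (j + 2) ≤ _
      rw [dtwA]
      exact add_le_add_left ((min_le_left _ _).trans (min_le_left _ _)) _


lemma dtwA_le_pinVal (hsub : ∀ p q, 0 ≤ sub p q) (i : ℕ) (hi : 1 ≤ i) :
    ∀ a : ℕ → ℕ, (∀ k, 1 ≤ k → k ≤ i → 1 ≤ a k) →
      (∀ k l, 1 ≤ k → k ≤ l → l ≤ i → a k ≤ a l) →
      dtwA sub τq τd i (a i) ≤ pinVal τq τd sub i a := by
  induction i, hi using Nat.le_induction with
  | base =>
    intro a h1 _
    have ha : 1 ≤ a 1 := h1 1 le_rfl le_rfl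
    rw [dtwA_one τq τd sub (a 1) ha, pinVal_one τq τd sub a ha]
  | succ i hi IH =>
    intro a h1 h2
    have hai : 1 ≤ a i := h1 i (by omega) (by omega)
    have hips : 1 ≤ a (i + 1) := h1 (i + 1) (by omega) le_rfl
    have hkj : a i ≤ a (i + 1) := h2 i (i + 1) (by omega) (by omega) le_rfl
    have IH' : dtwA sub τq τd i (a i) ≤ pinVal τq τd sub i a :=
      IH a (fun k hk1 hk2 => h1 k hk1 (by omega)) (fun k l hk hkl hl => h2 k l hk hkl (by omega))
    rw [pinVal_succ τq τd sub a (i + 1) (by omega), show i + 1 - 1 = i from rfl,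
      convCost_ne1 _ _ _ _ _ (show i + 1 ≠ 1 by omega), show i + 1 - 1 = i from rfl]
    by_cases hc1 : a i = a (i + 1)
    · rw [if_pos hc1]
      have h3 := dtwA_vert τq τd sub i (a (i + 1)) hi hips
      rw [← hc1] at h3 ⊢
      exact h3.trans (add_le_add_left IH' _)
    · by_cases hc2 : a i = a (i + 1) - 1
      · rw [if_neg hc1, if_pos hc2]
        have hj : a (i + 1) = a i + 1 := by omega
        rw [hj]
        exact (dtwA_diag τq τd sub i (a i) hi hai).trans (add_le_add_left IH' _)
      · rw [if_neg hc1, if_neg hc2]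
        have h2le : a i + 2 ≤ a (i + 1) := by omega
        have key : dtwA sub τq τd (i + 1) (a (i + 1)) - pinVal τq τd sub i a
            ≤ insC τq τd sub (i + 1) (a i) (a (i + 1)) := by
          apply le_insC τq τd sub (show a i ≤ a (i + 1) - 1 by omega)
          intro t ht1 ht2
          rw [sub_le_iff_le_add, show i + 1 - 1 = i from rfl]
          have ht : 1 ≤ t := le_trans hai ht1
          have ha1 : dtwA sub τq τd (i + 1) (a (i + 1)) ≤ dtwA sub τq τd (i + 1) (t + 1) +
              ∑ k ∈ Finset.Icc (t + 1 + 1) (a (i + 1)), sub (τq (i + 1)) (τd k) :=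
            dtwA_row τq τd sub (i + 1) (by omega) (t + 1) (by omega) (a (i + 1)) (by omega)
          have hb : dtwA sub τq τd (i + 1) (t + 1) ≤ dtwA sub τq τd i t +
              sub (τq (i + 1)) (τd (t + 1)) := dtwA_diag τq τd sub i t hi ht
          have hc : dtwA sub τq τd i t ≤ dtwA sub τq τd i (a i) +
              ∑ k ∈ Finset.Icc (a i + 1) t, sub (τq i) (τd k) :=
            dtwA_row τq τd sub i hi (a i) hai t ht1
          have hd : ∑ k ∈ Finset.Icc (t + 1) (a (i + 1)), sub (τq (i + 1)) (τd k) =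
              sub (τq (i + 1)) (τd (t + 1)) +
              ∑ k ∈ Finset.Icc (t + 1 + 1) (a (i + 1)), sub (τq (i + 1)) (τd k) :=
            sum_Icc_bot _ (by omega)
          linarith
        linarith


lemma pin_extend2 (i b : ℕ) (a : ℕ → ℕ) :
    pinVal τq τd sub (i + 2) (fun k => if k ≤ i + 1 then a k else b)
      = pinVal τq τd sub (i + 1) a +
        convCost (fun i j => sub (τq i) (τd j)) (fun i j => sub (τq i) (τd j))
          (insC τq τd sub) (fun k => if k ≤ i + 1 then a k else b) (i + 2) := by
  rw [pinVal_succ τq τd sub _ (i + 2) (by omega), show i + 2 - 1 = i + 1 from rfl,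
    pinVal_congr τq τd sub _ a (i + 1) (by omega) (fun k hk1 hk2 => by simp [hk2])]

lemma matching_extend (i j b : ℕ) (a : ℕ → ℕ) (h : IsMatchingOn (i + 1) 1 b a)
    (hbj : b ≤ j) (hj : 1 ≤ j) :
    IsMatchingOn (i + 2) 1 j (fun k => if k ≤ i + 1 then a k else j) := by
  obtain ⟨hbd, hmono⟩ := h
  constructor
  · intro k hk1 hk2
    by_cases hk : k ≤ i + 1
    · simp only [if_pos hk]
      exact ⟨(hbd k hk1 hk).1, le_trans (hbd k hk1 hk).2 hbj⟩
    · simp only [if_neg hk]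
      exact ⟨hj, le_rfl⟩
  · intro k l hk hkl hl
    by_cases hlk : l ≤ i + 1
    · have hkk : k ≤ i + 1 := le_trans hkl hlk
      simp only [if_pos hkk, if_pos hlk]
      exact hmono k l hk hkl hlk
    · simp only [if_neg hlk]
      by_cases hkk : k ≤ i + 1
      · simp only [if_pos hkk]
        exact le_trans (hbd k hk hkk).2 hbj
      · simp only [if_neg hkk]
        exact le_rfl


lemma exists_pin (hsub : ∀ p q, 0 ≤ sub p q) :
    ∀ N i j : ℕ, 1 ≤ i → 1 ≤ j → i + j ≤ N →
      ∃ a : ℕ → ℕ, IsMatchingOn i 1 j a ∧ a i = j ∧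
        pinVal τq τd sub i a ≤ dtwA sub τq τd i j := by
  intro N
  induction N with
  | zero => intro i j hi hj h; exact absurd h (by omega)
  | succ N IHN =>
    intro i j hi hj hN
    rcases eq_or_lt_of_le hi with hi1 | hi2
    · -- i = 1
      obtain rfl : 1 = i := hi1
      refine ⟨fun _ => j, ⟨fun k _ _ => ⟨hj, le_rfl⟩, fun _ _ _ _ _ => le_rfl⟩, rfl, ?_⟩
      rw [pinVal_one τq τd sub _ hj, dtwA_one τq τd sub j hj]
    · obtain ⟨i, rfl⟩ : ∃ i', i = i' + 2 := ⟨i - 2, by omega⟩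
      rcases eq_or_lt_of_le hj with hj1 | hj2
      · -- j = 1
        obtain rfl : 1 = j := hj1
        refine ⟨fun _ => 1, ⟨fun k _ _ => ⟨le_rfl, le_rfl⟩, fun _ _ _ _ _ => le_rfl⟩, rfl,
          le_of_eq ?_⟩
        rw [dtwA_col τq τd sub (i + 2) (by omega)]
        unfold pinVal totalCost
        rw [show (1 : ℕ) - 1 = 0 from rfl, Finset.Icc_eq_empty (by omega), Finset.sum_empty,
          zero_add]
        refine Finset.sum_congr rfl fun k hk => ?_
        simp only [Finset.mem_Icc] at hk
        rcases eq_or_ne k 1 with rfl | hk1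
        · rw [convCost_one]
        · rw [convCost_ne1 _ _ _ _ _ hk1, if_pos rfl]
      · obtain ⟨j, rfl⟩ : ∃ j', j = j' + 2 := ⟨j - 2, by omega⟩
        rw [dtwA]
        rcases min_cases (min (dtwA sub τq τd (i + 1) (j + 2)) (dtwA sub τq τd (i + 2) (j + 1)))
          (dtwA sub τq τd (i + 1) (j + 1)) with ⟨h1, -⟩ | ⟨h1, -⟩
        · rcases min_cases (dtwA sub τq τd (i + 1) (j + 2)) (dtwA sub τq τd (i + 2) (j + 1))
            with ⟨h2, -⟩ | ⟨h2, -⟩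
          · -- min = dtwA (i+1) (j+2)
            rw [h1, h2]
            obtain ⟨a, hmat, hend, hle⟩ := IHN (i + 1) (j + 2) (by omega) (by omega) (by omega)
            refine ⟨fun k => if k ≤ i + 1 then a k else j + 2,
              matching_extend i (j + 2) (j + 2) a hmat le_rfl (by omega),
              if_neg (by omega), ?_⟩
            rw [pin_extend2]
            have hcv : convCost (fun i j => sub (τq i) (τd j)) (fun i j => sub (τq i) (τd j))
                (insC τq τd sub) (fun k => if k ≤ i + 1 then a k else j + 2) (i + 2)
                = sub (τq (i + 2)) (τd (j + 2)) := by
              rw [convCost_ne1 _ _ _ _ _ (by omega), show i + 2 - 1 = i + 1 from rfl]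
              have c1 : i + 1 ≤ i + 1 := le_rfl
              have c2 : ¬ i + 2 ≤ i + 1 := by omega
              simp only [if_pos c1, if_neg c2]
              rw [hend, if_pos rfl]
            rw [hcv]
            exact add_le_add_left hle _
          · -- min = dtwA (i+2) (j+1)
            rw [h1, h2]
            obtain ⟨a, hmat, hend, hle⟩ := IHN (i + 2) (j + 1) (by omega) (by omega) (by omega)
            obtain ⟨hbd, hmono⟩ := hmat
            have hk01 : 1 ≤ a (i + 1) := (hbd (i + 1) (by omega) (by omega)).1
            have hk02 : a (i + 1) ≤ j + 1 := by
              have := hmono (i + 1) (i + 2) (by omega) (by omega) le_rfl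
              omega
            refine ⟨fun k => if k ≤ i + 1 then a k else j + 2,
              matching_extend i (j + 2) (j + 1) a
                ⟨fun k h1 h2 => hbd k h1 (by omega), fun k l h1 h2 h3 => hmono k l h1 h2 (by omega)⟩
                (by omega) (by omega),
              if_neg (by omega), ?_⟩
            rw [pin_extend2]
            have hsplit : pinVal τq τd sub (i + 2) a = pinVal τq τd sub (i + 1) a +
                convCost (fun i j => sub (τq i) (τd j)) (fun i j => sub (τq i) (τd j))
                  (insC τq τd sub) a (i + 2) := by
              rw [pinVal_succ τq τd sub a (i + 2) (by omega), show i + 2 - 1 = i + 1 from rfl]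
            have hkey : convCost (fun i j => sub (τq i) (τd j)) (fun i j => sub (τq i) (τd j))
                (insC τq τd sub) (fun k => if k ≤ i + 1 then a k else j + 2) (i + 2)
                ≤ convCost (fun i j => sub (τq i) (τd j)) (fun i j => sub (τq i) (τd j))
                  (insC τq τd sub) a (i + 2) + sub (τq (i + 2)) (τd (j + 2)) := by
              rw [convCost_ne1 _ _ _ _ _ (show i + 2 ≠ 1 by omega),
                convCost_ne1 _ _ _ _ _ (show i + 2 ≠ 1 by omega),
                show i + 2 - 1 = i + 1 from rfl]
              have c1 : i + 1 ≤ i + 1 := le_rfl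
              have c2 : ¬ i + 2 ≤ i + 1 := by omega
              simp only [if_pos c1, if_neg c2]
              rw [hend]
              by_cases hk0a : a (i + 1) = j + 1
              · rw [if_pos hk0a, if_neg (by omega), if_pos (by omega)]
                have := hsub (τq (i + 2)) (τd (j + 1))
                linarith
              · by_cases hk0b : a (i + 1) = j
                · rw [if_neg hk0a, if_neg (by omega), if_neg (by omega), if_pos (by omega)]
                  have h3 := insC_le τq τd sub hsub (i := i + 2) (k := a (i + 1)) (j := j + 2)
                    (a (i + 1)) le_rfl (by omega)
                  rw [Finset.Icc_eq_empty (by omega), Finset.sum_empty, zero_add, hk0b] at h3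
                  rw [Finset.sum_Icc_succ_top (show j + 1 ≤ j + 1 + 1 by omega),
                    Finset.Icc_self, Finset.sum_singleton] at h3
                  rw [hk0b]
                  exact h3
                · rw [if_neg hk0a, if_neg (by omega), if_neg (by omega), if_neg (by omega)]
                  exact insC_step τq τd sub hsub (i + 2) (a (i + 1)) (j + 1) (by omega) (by omega)
            linarith
        · -- min = dtwA (i+1) (j+1)
          rw [h1]
          obtain ⟨a, hmat, hend, hle⟩ := IHN (i + 1) (j + 1) (by omega) (by omega) (by omega)
          refine ⟨fun k => if k ≤ i + 1 then a k else j + 2,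
            matching_extend i (j + 2) (j + 1) a hmat (by omega) (by omega),
            if_neg (by omega), ?_⟩
          rw [pin_extend2]
          have hcv : convCost (fun i j => sub (τq i) (τd j)) (fun i j => sub (τq i) (τd j))
              (insC τq τd sub) (fun k => if k ≤ i + 1 then a k else j + 2) (i + 2)
              = sub (τq (i + 2)) (τd (j + 2)) := by
            rw [convCost_ne1 _ _ _ _ _ (by omega), show i + 2 - 1 = i + 1 from rfl]
            have c1 : i + 1 ≤ i + 1 := le_rfl
            have c2 : ¬ i + 2 ≤ i + 1 := by omega
            simp only [if_pos c1, if_neg c2]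
            rw [hend, if_neg (by omega), if_pos (by omega)]
          rw [hcv]
          exact add_le_add_left hle _


lemma totalCost_nonneg' (hsub : ∀ p q, 0 ≤ sub p q) (mm : ℕ) (a : ℕ → ℕ) :
    0 ≤ totalCost (fun i j => sub (τq i) (τd j)) (fun i j => sub (τq i) (τd j))
      (insC τq τd sub) mm a :=
  Finset.sum_nonneg fun k _ => convCost_nonneg τq τd sub hsub a k

end AuxDTW

/-- `dtw(τq, τd)` equals the minimum, over all matching sequences
`a : {1,…,m} → {1,…,n}`, of `Σ_{k=1}^{a(1)−1} sub(τq[1],τd[k]) + Σ_{i=1}^{m} Cost(i,a) +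
Σ_{k=a(m)+1}^{n} sub(τq[m],τd[k])`, where `Cost` uses the DTW conversion costs. -/
theorem dtw_eq_min_matching_cost {P : Type*}
    (m n : ℕ) (hm : 1 ≤ m) (hn : 1 ≤ n)
    (τq τd : ℕ → P) (sub : P → P → ℝ) (hsub : ∀ p q, 0 ≤ sub p q) :
    dtwA sub τq τd m n =
      sInf {v : ℝ | ∃ a : ℕ → ℕ, IsMatchingOn m 1 n a ∧
        v = (∑ k ∈ Finset.Icc 1 (a 1 - 1), sub (τq 1) (τd k)) +
            totalCost (fun i j => sub (τq i) (τd j)) (fun i j => sub (τq i) (τd j))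
              (fun i k j => sInf {w : ℝ | ∃ t : ℕ, k ≤ t ∧ t ≤ j - 1 ∧
                w = (∑ p ∈ Finset.Icc (k + 1) t, sub (τq (i - 1)) (τd p)) +
                    ∑ p ∈ Finset.Icc (t + 1) j, sub (τq i) (τd p)})
              m a +
            ∑ k ∈ Finset.Icc (a m + 1) n, sub (τq m) (τd k)} := by
  obtain ⟨a0, hmat0, hend0, hle0⟩ := exists_pin τq τd sub hsub (m + n) m n hm hn le_rfl
  have hmem : pinVal τq τd sub m a0 + ∑ k ∈ Finset.Icc (a0 m + 1) n, sub (τq m) (τd k) ∈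
      {v : ℝ | ∃ a : ℕ → ℕ, IsMatchingOn m 1 n a ∧
        v = (∑ k ∈ Finset.Icc 1 (a 1 - 1), sub (τq 1) (τd k)) +
            totalCost (fun i j => sub (τq i) (τd j)) (fun i j => sub (τq i) (τd j))
              (fun i k j => sInf {w : ℝ | ∃ t : ℕ, k ≤ t ∧ t ≤ j - 1 ∧
                w = (∑ p ∈ Finset.Icc (k + 1) t, sub (τq (i - 1)) (τd p)) +
                    ∑ p ∈ Finset.Icc (t + 1) j, sub (τq i) (τd p)})
              m a +
            ∑ k ∈ Finset.Icc (a m + 1) n, sub (τq m) (τd k)} :=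
    ⟨a0, hmat0, rfl⟩
  have hbdd : BddBelow {v : ℝ | ∃ a : ℕ → ℕ, IsMatchingOn m 1 n a ∧
        v = (∑ k ∈ Finset.Icc 1 (a 1 - 1), sub (τq 1) (τd k)) +
            totalCost (fun i j => sub (τq i) (τd j)) (fun i j => sub (τq i) (τd j))
              (fun i k j => sInf {w : ℝ | ∃ t : ℕ, k ≤ t ∧ t ≤ j - 1 ∧
                w = (∑ p ∈ Finset.Icc (k + 1) t, sub (τq (i - 1)) (τd p)) +
                    ∑ p ∈ Finset.Icc (t + 1) j, sub (τq i) (τd p)})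
              m a +
            ∑ k ∈ Finset.Icc (a m + 1) n, sub (τq m) (τd k)} := by
    refine ⟨0, ?_⟩
    rintro v ⟨a, hmat, rfl⟩
    have h1 : (0:ℝ) ≤ ∑ k ∈ Finset.Icc 1 (a 1 - 1), sub (τq 1) (τd k) :=
      Finset.sum_nonneg fun k _ => hsub _ _
    have h2 := totalCost_nonneg' τq τd sub hsub m a
    have h3 : (0:ℝ) ≤ ∑ k ∈ Finset.Icc (a m + 1) n, sub (τq m) (τd k) :=
      Finset.sum_nonneg fun k _ => hsub _ _
    exact add_nonneg (add_nonneg h1 h2) h3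
  have hlow : ∀ v ∈ {v : ℝ | ∃ a : ℕ → ℕ, IsMatchingOn m 1 n a ∧
        v = (∑ k ∈ Finset.Icc 1 (a 1 - 1), sub (τq 1) (τd k)) +
            totalCost (fun i j => sub (τq i) (τd j)) (fun i j => sub (τq i) (τd j))
              (fun i k j => sInf {w : ℝ | ∃ t : ℕ, k ≤ t ∧ t ≤ j - 1 ∧
                w = (∑ p ∈ Finset.Icc (k + 1) t, sub (τq (i - 1)) (τd p)) +
                    ∑ p ∈ Finset.Icc (t + 1) j, sub (τq i) (τd p)})
              m a +
            ∑ k ∈ Finset.Icc (a m + 1) n, sub (τq m) (τd k)},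
      dtwA sub τq τd m n ≤ v := by
    rintro v ⟨a, ⟨hbd, hmono⟩, rfl⟩
    show dtwA sub τq τd m n ≤ pinVal τq τd sub m a +
      ∑ k ∈ Finset.Icc (a m + 1) n, sub (τq m) (τd k)
    have h1 : dtwA sub τq τd m (a m) ≤ pinVal τq τd sub m a :=
      dtwA_le_pinVal τq τd sub hsub m hm a (fun k hk1 hk2 => (hbd k hk1 hk2).1) hmono
    have h2 : dtwA sub τq τd m n ≤ dtwA sub τq τd m (a m) +
        ∑ k ∈ Finset.Icc (a m + 1) n, sub (τq m) (τd k) :=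
      dtwA_row τq τd sub m hm (a m) ((hbd m hm le_rfl).1) n ((hbd m hm le_rfl).2)
    linarith
  refine le_antisymm (le_csInf ⟨_, hmem⟩ hlow) ?_
  have hs := csInf_le hbdd hmem
  have hsuf : ∑ k ∈ Finset.Icc (a0 m + 1) n, sub (τq m) (τd k) = 0 := by
    rw [hend0, Finset.Icc_eq_empty (by omega), Finset.sum_empty]
  rw [hsuf, add_zero] at hs
  exact hs.trans hle0
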